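/- Let Y be a symmetric invertible real n×n matrix and η a real number. Then the quadratic function E(x) = (1/2)·xᵀ Y⁻¹ x satisfies the past H∞ Hamilton–Jacobi–Bellman equation of the linear system ẋ = A x + B u, y = C x, i.e. ⟪Y⁻¹ x, A x⟫ + (1/2)·‖Bᵀ Y⁻¹ x‖² − (η/2)·‖C x‖² = 0 for all x ∈ ℝⁿ, if and only if Y satisfies the H∞ algebraic Riccati equation A Y + Y Aᵀ + B Bᵀ − η · Y Cᵀ C Y = 0. -/

import Mathlib

open Matrix
open scoped RealInnerProductSpace

noncomputable section

def toEuc {n : ℕ} (v : Fin n → ℝ) : EuclideanSpace ℝ (Fin n) := WithLp.toLp 2 v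

lemma inner_toEuc {n : ℕ} (u v : Fin n → ℝ) : ⟪toEuc u, toEuc v⟫ = u ⬝ᵥ v := by
  simp [toEuc, PiLp.inner_apply, dotProduct, mul_comm]

lemma norm_toEuc_sq {n : ℕ} (u : Fin n → ℝ) : ‖toEuc u‖ ^ 2 = u ⬝ᵥ u := by
  rw [← real_inner_self_eq_norm_sq, inner_toEuc]

lemma dot_aux {n k : ℕ} (N : Matrix (Fin k) (Fin n) ℝ) (M : Matrix (Fin k) (Fin n) ℝ)
    (x : Fin n → ℝ) : (N.mulVec x) ⬝ᵥ (M.mulVec x) = x ⬝ᵥ ((Nᵀ * M).mulVec x) := by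
  rw [← Matrix.mulVec_mulVec, Matrix.dotProduct_mulVec (A := Nᵀ), Matrix.vecMul_transpose]

lemma quad_zero_iff {n : ℕ} (M : Matrix (Fin n) (Fin n) ℝ) :
    (∀ x : Fin n → ℝ, x ⬝ᵥ M.mulVec x = 0) ↔ M + Mᵀ = 0 := by
  constructor
  · intro h
    ext i j
    have hij := h (Pi.single i 1 + Pi.single j 1)
    have hi := h (Pi.single i 1)
    have hj := h (Pi.single j 1)
    have e : ∀ a b : Fin n, (Pi.single a 1 : Fin n → ℝ) ⬝ᵥ M.mulVec (Pi.single b 1) = M a b := by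
      intro a b
      simp [Matrix.mulVec_single, single_dotProduct]
    simp only [Matrix.mulVec_add, dotProduct_add, add_dotProduct, e] at hij hi hj
    simp only [Matrix.add_apply, Matrix.transpose_apply, Matrix.zero_apply]
    linarith
  · intro h x
    have h2 : x ⬝ᵥ (M + Mᵀ).mulVec x = 0 := by rw [h]; simp
    have hsym : x ⬝ᵥ Mᵀ.mulVec x = x ⬝ᵥ M.mulVec x := by
      rw [Matrix.dotProduct_mulVec, ← Matrix.mulVec_transpose, Matrix.transpose_transpose,
        dotProduct_comm]
    rw [Matrix.add_mulVec, dotProduct_add, hsym] at h2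
    linarith

/-- For a linear system, the quadratic ansatz `E(x) = (1/2) xᵀ Y⁻¹ x` with `Y`
symmetric and invertible satisfies the past H∞ HJB equation
`⟪Y⁻¹x, Ax⟫ + (1/2)‖BᵀY⁻¹x‖² - (η/2)‖Cx‖² = 0` for all `x` iff `Y` solves the
H∞ filter algebraic Riccati equation `AY + YAᵀ + BBᵀ - η Y CᵀC Y = 0`
(Theorem 3). -/
theorem quadratic_solves_past_hjb_iff_riccati
    {n m p : ℕ}
    (A : Matrix (Fin n) (Fin n) ℝ) (B : Matrix (Fin n) (Fin m) ℝ)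
    (C : Matrix (Fin p) (Fin n) ℝ) (η : ℝ)
    (Y : Matrix (Fin n) (Fin n) ℝ) (hY : Yᵀ = Y) (hYinv : IsUnit Y) :
    (∀ x : EuclideanSpace ℝ (Fin n),
      ⟪toEuc (Y⁻¹.mulVec x), toEuc (A.mulVec x)⟫
        + (1 / 2) * ‖toEuc (Bᵀ.mulVec (Y⁻¹.mulVec x))‖ ^ 2
        - (η / 2) * ‖toEuc (C.mulVec x)‖ ^ 2 = 0) ↔
      A * Y + Y * Aᵀ + B * Bᵀ - η • (Y * (Cᵀ * C) * Y) = 0 := by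
  have hdet : IsUnit Y.det := (Matrix.isUnit_iff_isUnit_det Y).mp hYinv
  have hYY : Y * Y⁻¹ = 1 := Y.mul_nonsing_inv hdet
  have hYY' : Y⁻¹ * Y = 1 := Y.nonsing_inv_mul hdet
  have hYi : (Y⁻¹)ᵀ = Y⁻¹ := by rw [Matrix.transpose_nonsing_inv, hY]
  set M : Matrix (Fin n) (Fin n) ℝ :=
    Y⁻¹ * A + (1 / 2 : ℝ) • (Y⁻¹ * (B * Bᵀ) * Y⁻¹) - (η / 2) • (Cᵀ * C) with hM
  -- pointwise rewriting of the HJB expression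
  have hx : ∀ x : Fin n → ℝ,
      ⟪toEuc (Y⁻¹.mulVec x), toEuc (A.mulVec x)⟫
        + (1 / 2) * ‖toEuc (Bᵀ.mulVec (Y⁻¹.mulVec x))‖ ^ 2
        - (η / 2) * ‖toEuc (C.mulVec x)‖ ^ 2 = x ⬝ᵥ M.mulVec x := by
    intro x
    rw [inner_toEuc, norm_toEuc_sq, norm_toEuc_sq, Matrix.mulVec_mulVec,
      dot_aux, dot_aux, dot_aux]
    have h2 : (Bᵀ * Y⁻¹)ᵀ * (Bᵀ * Y⁻¹) = Y⁻¹ * (B * Bᵀ) * Y⁻¹ := by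
      rw [Matrix.transpose_mul, Matrix.transpose_transpose, hYi]
      simp [Matrix.mul_assoc]
    rw [h2, hM]
    simp only [Matrix.sub_mulVec, Matrix.add_mulVec, Matrix.smul_mulVec,
      dotProduct_sub, dotProduct_add, dotProduct_smul, smul_eq_mul, hYi]
  have step1 : (∀ x : EuclideanSpace ℝ (Fin n),
      ⟪toEuc (Y⁻¹.mulVec x), toEuc (A.mulVec x)⟫
        + (1 / 2) * ‖toEuc (Bᵀ.mulVec (Y⁻¹.mulVec x))‖ ^ 2
        - (η / 2) * ‖toEuc (C.mulVec x)‖ ^ 2 = 0) ↔ M + Mᵀ = 0 := by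
    rw [← quad_zero_iff]
    exact ⟨fun h x => by rw [← hx x]; exact h (WithLp.toLp 2 x), fun h x => by rw [hx x.ofLp]; exact h _⟩
  rw [step1]
  -- matrix algebra: M + Mᵀ = 0 ↔ Riccati
  have hMMt : Y * (M + Mᵀ) * Y = A * Y + Y * Aᵀ + B * Bᵀ - η • (Y * (Cᵀ * C) * Y) := by
    have ht : Mᵀ = Aᵀ * Y⁻¹ + (1 / 2 : ℝ) • (Y⁻¹ * (B * Bᵀ) * Y⁻¹) - (η / 2) • (Cᵀ * C) := by
      rw [hM]
      simp only [Matrix.transpose_sub, Matrix.transpose_add, Matrix.transpose_smul,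
        Matrix.transpose_mul, Matrix.transpose_transpose, hYi]
      simp [Matrix.mul_assoc]
    rw [ht, hM]
    simp only [Matrix.mul_add, Matrix.add_mul, Matrix.mul_sub, Matrix.sub_mul,
      Matrix.mul_smul, Matrix.smul_mul, Matrix.mul_assoc,
      Matrix.mul_nonsing_inv_cancel_left Y _ hdet,
      Matrix.nonsing_inv_mul_cancel_left]
    simp only [hYY', Matrix.mul_one]
    module
  constructor
  · intro h
    rw [← hMMt, h]
    simp
  · intro h
    rw [← hMMt] at h
    have : Y⁻¹ * (Y * (M + Mᵀ) * Y) * Y⁻¹ = 0 := by rw [h]; simp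
    rwa [Matrix.mul_assoc, Matrix.mul_assoc, hYY, Matrix.mul_one,
      ← Matrix.mul_assoc, hYY', Matrix.one_mul] at this
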